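/- arXiv:2106.03900 — 2 statements merged into one kernel-verified Lean document; each statement's English description precedes it below -/
import Mathlib

section
/- Let K be a field and A a sortable set of monomials of degree d in S = K[x_1,...,x_n]. Then the K-subalgebra K[A] of S generated by A is an integrally closed (normal) integral domain. -/
open MvPolynomial

/-- The sorting operator on pairs of monomials of the same degree in `K[x_1,…,x_n]`,
identified with their exponent vectors.  Writing `u*v = x_{i_1}⋯x_{i_{2d}}` with
`i_1 ≤ … ≤ i_{2d}`, the first component takes the variables in the odd positions and the
second component those in the even positions. -/
noncomputable def sortPair {n : ℕ} (u v : Fin n →₀ ℕ) :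
    (Fin n →₀ ℕ) × (Fin n →₀ ℕ) :=
  (Finsupp.equivFunOnFinite.symm fun i =>
      ((∑ j ∈ Finset.univ.filter (fun j => j ≤ i), (u j + v j)) + 1) / 2
        - ((∑ j ∈ Finset.univ.filter (fun j => j < i), (u j + v j)) + 1) / 2,
   Finsupp.equivFunOnFinite.symm fun i =>
      (∑ j ∈ Finset.univ.filter (fun j => j ≤ i), (u j + v j)) / 2
        - (∑ j ∈ Finset.univ.filter (fun j => j < i), (u j + v j)) / 2)

set_option maxHeartbeats 1000000
set_option synthInstance.maxHeartbeats 400000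

namespace Stmt1

variable {n : ℕ}

/-- prefix sums -/
def pf (m : Fin n →₀ ℕ) (k : ℕ) : ℕ :=
  ∑ j ∈ Finset.univ.filter (fun j : Fin n => (j : ℕ) < k), m j

/-- the `j`-th sorted part (0-indexed) of `m` cut into `s` parts. -/
noncomputable def part (s j : ℕ) (m : Fin n →₀ ℕ) : Fin n →₀ ℕ :=
  Finsupp.equivFunOnFinite.symm fun i =>
    ((∑ j' ∈ Finset.univ.filter (fun j' => j' ≤ i), m j') + (s - 1 - j)) / s
      - ((∑ j' ∈ Finset.univ.filter (fun j' => j' < i), m j') + (s - 1 - j)) / s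

lemma filter_le_eq (i : Fin n) :
    Finset.univ.filter (fun j : Fin n => j ≤ i) =
      Finset.univ.filter (fun j : Fin n => (j : ℕ) < (i : ℕ) + 1) := by
  ext j
  simp only [Finset.mem_filter, Finset.mem_univ, true_and]
  omega

lemma filter_lt_eq (i : Fin n) :
    Finset.univ.filter (fun j : Fin n => j < i) =
      Finset.univ.filter (fun j : Fin n => (j : ℕ) < (i : ℕ)) := by
  ext j
  simp only [Finset.mem_filter, Finset.mem_univ, true_and]
  omega

lemma part_apply (s j : ℕ) (m : Fin n →₀ ℕ) (i : Fin n) :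
    part s j m i = (pf m ((i : ℕ) + 1) + (s - 1 - j)) / s - (pf m (i : ℕ) + (s - 1 - j)) / s := by
  simp [part, pf, filter_le_eq, filter_lt_eq]

lemma sortPair_eq (u v : Fin n →₀ ℕ) :
    sortPair u v = (part 2 0 (u + v), part 2 1 (u + v)) := by
  rfl

lemma pf_zero (m : Fin n →₀ ℕ) : pf m 0 = 0 := by simp [pf]

lemma pf_succ (m : Fin n →₀ ℕ) (k : ℕ) :
    pf m (k + 1) = pf m k + (if h : k < n then m ⟨k, h⟩ else 0) := by
  rw [pf, pf, Finset.sum_filter, Finset.sum_filter]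
  have : ∀ j : Fin n, (if (j : ℕ) < k + 1 then m j else 0)
      = (if (j : ℕ) < k then m j else 0) + (if (j : ℕ) = k then m j else 0) := by
    intro j; split_ifs <;> omega
  rw [Finset.sum_congr rfl fun j _ => this j, Finset.sum_add_distrib]
  congr 1
  by_cases h : k < n
  · rw [dif_pos h]
    rw [Finset.sum_eq_single (⟨k, h⟩ : Fin n)]
    · simp
    · intro b _ hb
      rw [if_neg]; intro hc; exact hb (by ext; simpa using hc)
    · simp
  · rw [dif_neg h]
    apply Finset.sum_eq_zero
    intro j _
    rw [if_neg]; intro hc; exact h (hc ▸ j.isLt)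

lemma pf_mono (m : Fin n →₀ ℕ) : Monotone (pf m) := by
  apply monotone_nat_of_le_succ
  intro k; rw [pf_succ]; omega

lemma pf_add (u v : Fin n →₀ ℕ) (k : ℕ) : pf (u + v) k = pf u k + pf v k := by
  simp [pf, Finset.sum_add_distrib]

lemma pf_stab (m : Fin n →₀ ℕ) {k : ℕ} (hk : n ≤ k) : pf m k = pf m n := by
  unfold pf
  congr 1
  ext j
  simp only [Finset.mem_filter, Finset.mem_univ, true_and]
  exact ⟨fun _ => j.isLt, fun _ => lt_of_lt_of_le j.isLt hk⟩

lemma pf_apply_eq (m : Fin n →₀ ℕ) (i : Fin n) :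
    m i = pf m ((i : ℕ) + 1) - pf m (i : ℕ) := by
  rw [pf_succ, dif_pos i.isLt]
  simp

lemma ext_pf {u v : Fin n →₀ ℕ} (h : ∀ k, pf u k = pf v k) : u = v := by
  ext i
  rw [pf_apply_eq u i, pf_apply_eq v i, h, h]

lemma pf_total (m : Fin n →₀ ℕ) : (∑ i, m i) = pf m n := by
  rw [pf]
  congr 1
  ext j; simp [j.isLt]

lemma pf_smul (N : ℕ) (m : Fin n →₀ ℕ) (k : ℕ) : pf (N • m) k = N * pf m k := by
  simp [pf, Finset.mul_sum]

lemma part_pf {s j : ℕ} (hj : j < s) (m : Fin n →₀ ℕ) (k : ℕ) :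
    pf (part s j m) k = (pf m k + (s - 1 - j)) / s := by
  induction k with
  | zero => rw [pf_zero, pf_zero, Nat.div_eq_of_lt (by omega)]
  | succ k ih =>
    rw [pf_succ, ih]
    by_cases h : k < n
    · rw [dif_pos h]
      have := part_apply s j m ⟨k, h⟩
      simp only [Fin.val_mk] at this
      rw [this]
      have hle : pf m k ≤ pf m (k+1) := pf_mono m (by omega)
      have hmono : (pf m k + (s - 1 - j)) / s ≤ (pf m (k + 1) + (s - 1 - j)) / s :=
        Nat.div_le_div_right (by have := pf_mono m (show k ≤ k+1 by omega); omega)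
      omega
    · rw [dif_neg h]
      have : pf m (k + 1) = pf m k := by rw [pf_succ, dif_neg h]; omega
      rw [this]; omega

/-! ### arithmetic lemmas -/

lemma sum_div_aux (s x : ℕ) (hs : 0 < s) :
    ∑ j ∈ Finset.range s, (x + j) / s = x := by
  induction x with
  | zero =>
    apply Finset.sum_eq_zero
    intro j hj
    exact Nat.div_eq_of_lt (by simpa using hj)
  | succ x ih =>
    have h1 : ∀ j, (x + 1 + j) / s = (x + (j + 1)) / s := fun j => by ring_nf
    calc ∑ j ∈ Finset.range s, (x + 1 + j) / s
        = ∑ j ∈ Finset.range s, (x + (j + 1)) / s := Finset.sum_congr rfl fun j _ => h1 j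
      _ = ∑ j ∈ Finset.range (s+1), (x + j) / s - (x + 0) / s := by
          rw [Finset.sum_range_succ' (fun j => (x + j) / s) s]; omega
      _ = (∑ j ∈ Finset.range s, (x + j) / s + (x + s)/s) - x / s := by
          rw [Finset.sum_range_succ]; simp
      _ = x + 1 := by
          have : (x + s) / s = x / s + 1 := by
            rw [Nat.add_div_right _ hs]
          have hxs : x / s ≤ x := Nat.div_le_self x s
          omega

lemma sum_div_aux' (s x : ℕ) (hs : 0 < s) :
    ∑ j ∈ Finset.range s, (x + (s - 1 - j)) / s = x := by
  rw [Finset.sum_range_reflect (fun j => (x + j) / s) s, sum_div_aux s x hs]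

/-- key division identity: `(N*x + j') / (N*s) = (x + j'/N) / s` for `j' < N*s`. -/
lemma div_div_aux (N s x j' : ℕ) (hN : 0 < N) (hj : j' < N * s) :
    (N * x + j') / (N * s) = (x + j' / N) / s := by
  have hs : 0 < s := by
    rcases Nat.eq_zero_or_pos s with h | h
    · subst h; simp at hj
    · exact h
  obtain ⟨a, b, hb, hab⟩ : ∃ a b, b < N ∧ j' = N * a + b :=
    ⟨j' / N, j' % N, Nat.mod_lt _ hN, (Nat.div_add_mod j' N).symm⟩
  have ha : j' / N = a := by
    rw [hab, Nat.mul_add_div hN, Nat.div_eq_of_lt hb, Nat.add_zero]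
  obtain ⟨c, e, he, hce⟩ : ∃ c e, e < s ∧ x + a = s * c + e :=
    ⟨(x + a) / s, (x + a) % s, Nat.mod_lt _ hs, (Nat.div_add_mod (x+a) s).symm⟩
  have key : N * x + j' = (N * s) * c + (N * e + b) := by
    rw [hab]
    have h5 : N * (x + a) = N * (s * c + e) := by rw [hce]
    calc N * x + (N * a + b) = N * (x + a) + b := by ring
      _ = N * (s * c + e) + b := by rw [h5]
      _ = N * s * c + (N * e + b) := by ring
  have hlt : N * e + b < N * s := by
    calc N * e + b < N * e + N := Nat.add_lt_add_left hb _
      _ = N * (e + 1) := by ring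
      _ ≤ N * s := Nat.mul_le_mul_left _ (by omega)
  rw [key, ha, Nat.mul_add_div (by positivity), Nat.div_eq_of_lt hlt, hce,
    Nat.mul_add_div hs, Nat.div_eq_of_lt he]

/-- specialised version with `j' = N*s - 1 - q*N`. -/
lemma div_div_aux2 (N s x q : ℕ) (hN : 0 < N) (hq : q < s) :
    (N * x + (N * s - 1 - q * N)) / (N * s) = (x + (s - 1 - q)) / s := by
  obtain ⟨a, ha⟩ : ∃ a, s = q + a + 1 := ⟨s - q - 1, by omega⟩
  have e1 : N * s = N * q + N * a + N := by rw [ha]; ring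
  have e2 : q * N = N * q := by ring
  have e3 : N * s - 1 - q * N = N * a + (N - 1) := by omega
  have e4 : (N * a + (N - 1)) / N = a := by
    rw [Nat.mul_add_div hN, Nat.div_eq_of_lt (by omega), Nat.add_zero]
  rw [e3, div_div_aux N s x _ hN (by omega), e4]
  congr 2
  omega

/-- division identity for removing the top part. -/
lemma div_sub_top_aux (s j x : ℕ) (h1 : 1 ≤ j) (hj : j < s) :
    (x - (x + s - 1) / s + (s - 1 - j)) / (s - 1) = (x + (s - 1 - j)) / s := by
  have hs : 2 ≤ s := by omega
  obtain ⟨q, r, hr, hqr⟩ : ∃ q r, r < s ∧ x = s * q + r :=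
    ⟨x / s, x % s, Nat.mod_lt _ (by omega), (Nat.div_add_mod x s).symm⟩
  subst hqr
  have hq : q ≤ s * q := Nat.le_mul_of_pos_left q (by omega)
  have hsq : (s - 1) * q = s * q - q := by
    have : (s - 1) * q = s * q - 1 * q := by rw [Nat.sub_mul]
    omega
  rcases Nat.eq_zero_or_pos r with hr0 | hr1
  · subst hr0
    have h2 : (s * q + 0 + s - 1) / s = q := by
      have h' : s * q + 0 + s - 1 = s * q + (s - 1) := by omega
      rw [h', Nat.mul_add_div (by omega), Nat.div_eq_of_lt (by omega), Nat.add_zero]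
    rw [h2]
    have h3 : s * q + 0 - q = (s - 1) * q := by omega
    have h4 : s * q + 0 + (s - 1 - j) = s * q + (s - 1 - j) := by omega
    rw [h3, h4, Nat.mul_add_div (show 0 < s - 1 by omega), Nat.mul_add_div (show 0 < s by omega),
      Nat.div_eq_of_lt (by omega), Nat.div_eq_of_lt (by omega)]
  · obtain ⟨r', hr'⟩ : ∃ r', r = r' + 1 := ⟨r - 1, by omega⟩
    subst hr'
    have h2 : (s * q + (r' + 1) + s - 1) / s = q + 1 := by
      have h' : s * q + (r' + 1) + s - 1 = s * (q + 1) + r' := by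
        have : s * (q + 1) = s * q + s := by ring
        omega
      rw [h', Nat.mul_add_div (by omega), Nat.div_eq_of_lt (by omega), Nat.add_zero]
    rw [h2]
    have h3 : s * q + (r' + 1) - (q + 1) + (s - 1 - j) = (s - 1) * q + (r' + (s - 1 - j)) := by
      omega
    have h4 : s * q + (r' + 1) + (s - 1 - j) = s * q + (r' + 1 + (s - 1 - j)) := by omega
    rw [h3, h4, Nat.mul_add_div (show 0 < s - 1 by omega), Nat.mul_add_div (show 0 < s by omega)]
    congr 1
    have hr's : r' ≤ s - 2 := by omega
    by_cases hcase : j ≤ r'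
    · have l1 : (r' + (s - 1 - j)) / (s - 1) = 1 := by
        apply Nat.div_eq_of_lt_le <;> omega
      have l2 : (r' + 1 + (s - 1 - j)) / s = 1 := by
        apply Nat.div_eq_of_lt_le <;> omega
      rw [l1, l2]
    · have l1 : (r' + (s - 1 - j)) / (s - 1) = 0 := Nat.div_eq_of_lt (by omega)
      have l2 : (r' + 1 + (s - 1 - j)) / s = 0 := Nat.div_eq_of_lt (by omega)
      rw [l1, l2]

/-! ### structural lemmas about parts -/

lemma pf_finset_sum {ι : Type*} (t : Finset ι) (f : ι → (Fin n →₀ ℕ)) (k : ℕ) :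
    pf (∑ j ∈ t, f j) k = ∑ j ∈ t, pf (f j) k := by
  classical
  induction t using Finset.induction with
  | empty => simp [pf]
  | insert a s hx ih =>
    rw [Finset.sum_insert hx, Finset.sum_insert hx, pf_add, ih]

lemma parts_sum {s : ℕ} (hs : 0 < s) (m : Fin n →₀ ℕ) :
    ∑ j ∈ Finset.range s, part s j m = m := by
  apply ext_pf
  intro k
  rw [pf_finset_sum]
  rw [Finset.sum_congr rfl fun j hj => part_pf (Finset.mem_range.mp hj) m k]
  exact sum_div_aux' s (pf m k) hs

lemma part_smul {N s q : ℕ} (hN : 0 < N) (hq : q < s) (m : Fin n →₀ ℕ) :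
    part (N * s) (q * N) (N • m) = part s q m := by
  have hqN : q * N < N * s := by
    calc q * N < s * N := (Nat.mul_lt_mul_right hN).mpr hq
      _ = N * s := Nat.mul_comm s N
  apply ext_pf
  intro k
  rw [part_pf hqN, part_pf hq, pf_smul]
  exact div_div_aux2 N s (pf m k) q hN hq

lemma part_rest {s j : ℕ} (h1 : 1 ≤ j) (hj : j < s) (m u0 T : Fin n →₀ ℕ)
    (hu0 : ∀ k, pf u0 k = (pf m k + (s - 1 - 0)) / s) (hT : m = u0 + T) :
    part s j m = part (s - 1) (j - 1) T := by
  apply ext_pf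
  intro k
  rw [part_pf hj, part_pf (by omega : j - 1 < s - 1)]
  have hadd : pf m k = pf u0 k + pf T k := by rw [hT, pf_add]
  have hTk : pf T k = pf m k - (pf m k + s - 1) / s := by
    have h0 := hu0 k
    have h2 : pf m k + (s - 1 - 0) = pf m k + s - 1 := by omega
    rw [h2] at h0
    omega
  have h3 : s - 1 - 1 - (j - 1) = s - 1 - j := by omega
  rw [hTk, h3]
  exact (div_sub_top_aux s j (pf m k) h1 hj).symm

/-! ### the sorting relation -/

def Rel (u v : Fin n →₀ ℕ) : Prop := sortPair u v = (u, v) ∨ sortPair u v = (v, u)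

lemma pf_part2_fst (u v : Fin n →₀ ℕ) (k : ℕ) :
    pf (part 2 0 (u + v)) k = (pf u k + pf v k + 1) / 2 := by
  rw [part_pf (by omega), pf_add]

lemma pf_part2_snd (u v : Fin n →₀ ℕ) (k : ℕ) :
    pf (part 2 1 (u + v)) k = (pf u k + pf v k) / 2 := by
  rw [part_pf (by omega), pf_add]
  omega

lemma rel_cases {u v : Fin n →₀ ℕ} (h : Rel u v) :
    (∀ k, pf u k = (pf u k + pf v k + 1) / 2 ∧ pf v k = (pf u k + pf v k) / 2) ∨
    (∀ k, pf v k = (pf u k + pf v k + 1) / 2 ∧ pf u k = (pf u k + pf v k) / 2) := by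
  rcases h with h | h <;> rw [sortPair_eq, Prod.mk.injEq] at h <;> obtain ⟨h1, h2⟩ := h
  · left
    intro k
    constructor
    · conv_lhs => rw [← h1]
      exact pf_part2_fst u v k
    · conv_lhs => rw [← h2]
      exact pf_part2_snd u v k
  · right
    intro k
    constructor
    · conv_lhs => rw [← h1]
      exact pf_part2_fst u v k
    · conv_lhs => rw [← h2]
      exact pf_part2_snd u v k

lemma rel_diff {u v : Fin n →₀ ℕ} (h : Rel u v) :
    ∀ k, pf u k ≤ pf v k + 1 ∧ pf v k ≤ pf u k + 1 := by
  rcases rel_cases h with h' | h' <;> exact fun k => by have := h' k; omega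

lemma rel_of_dom {u v : Fin n →₀ ℕ} (h : ∀ k, pf v k ≤ pf u k ∧ pf u k ≤ pf v k + 1) :
    sortPair u v = (u, v) := by
  rw [sortPair_eq, Prod.mk.injEq]
  constructor
  · apply (ext_pf _).symm
    intro k
    rw [pf_part2_fst]
    have := h k; omega
  · apply (ext_pf _).symm
    intro k
    rw [pf_part2_snd]
    have := h k; omega

lemma rel_symm {u v : Fin n →₀ ℕ} (h : Rel u v) : Rel v u := by
  have hsp : sortPair v u = sortPair u v := by
    rw [sortPair_eq, sortPair_eq, add_comm v u]
  rcases h with h | h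
  · right; rw [hsp, h]
  · left; rw [hsp, h]

/-! ### multiset sorting machinery -/

def psi (u : Fin n →₀ ℕ) : ℕ := ∑ k ∈ Finset.range (n+1), pf u k

def w1 (u : Fin n →₀ ℕ) : ℕ := ∑ k ∈ Finset.range (n+1), (pf u k)^2

def SortedTup (S : Multiset (Fin n →₀ ℕ)) : Prop :=
  ∀ u v rest, S = u ::ₘ v ::ₘ rest → Rel u v

def Phi (S : Multiset (Fin n →₀ ℕ)) : ℕ := (S.map w1).sum

def Phi2 (S : Multiset (Fin n →₀ ℕ)) : ℕ := (S.map (fun u => (psi u)^2)).sum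

noncomputable def BND (S : Multiset (Fin n →₀ ℕ)) : ℕ := Multiset.card S * (psi S.sum)^2

noncomputable def meas (S : Multiset (Fin n →₀ ℕ)) : ℕ := (BND S + 1) * Phi S + (BND S - Phi2 S)

lemma pf_forall_of_range {R : ℕ → ℕ → Prop} (u v : Fin n →₀ ℕ)
    (h : ∀ k ∈ Finset.range (n+1), R (pf u k) (pf v k)) : ∀ k, R (pf u k) (pf v k) := by
  intro k
  rcases le_or_gt k n with hk | hk
  · exact h k (Finset.mem_range.mpr (by omega))
  · rw [pf_stab u hk.le, pf_stab v hk.le]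
    exact h n (Finset.mem_range.mpr (by omega))

lemma pf_le_of_mem {S : Multiset (Fin n →₀ ℕ)} {u : Fin n →₀ ℕ} (h : u ∈ S) (k : ℕ) :
    pf u k ≤ pf S.sum k := by
  obtain ⟨T, rfl⟩ : ∃ T, S = u ::ₘ T := ⟨S.erase u, (Multiset.cons_erase h).symm⟩
  rw [Multiset.sum_cons, pf_add]
  omega

lemma psi_le_of_mem {S : Multiset (Fin n →₀ ℕ)} {u : Fin n →₀ ℕ} (h : u ∈ S) :
    psi u ≤ psi S.sum :=
  Finset.sum_le_sum fun k _ => pf_le_of_mem h k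

lemma Phi2_le_BND (S : Multiset (Fin n →₀ ℕ)) : Phi2 S ≤ BND S := by
  have h := Multiset.sum_le_card_nsmul (S.map (fun u => (psi u)^2)) ((psi S.sum)^2) ?_
  · rw [Multiset.card_map, smul_eq_mul] at h
    exact h
  · intro x hx
    obtain ⟨u, hu, rfl⟩ := Multiset.mem_map.mp hx
    exact Nat.pow_le_pow_left (psi_le_of_mem hu) 2

/-- squares of the balanced split don't exceed the original. -/
lemma sq_balance (p q : ℕ) :
    ((p + q + 1) / 2)^2 + ((p + q) / 2)^2 ≤ p^2 + q^2 := by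
  obtain ⟨a, b, ha, hb⟩ : ∃ a b, a = (p + q + 1)/2 ∧ b = (p + q)/2 := ⟨_, _, rfl, rfl⟩
  rw [← ha, ← hb]
  have h1 : (a = b ∧ a + b = p + q) ∨ (a = b + 1 ∧ a + b = p + q ∧ p ≠ q) := by omega
  rcases h1 with ⟨h2, h3⟩ | ⟨h2, h3, h4⟩
  · zify
    nlinarith [sq_nonneg ((p:ℤ) - q)]
  · rcases Nat.lt_or_ge p q with h5 | h5
    · zify
      nlinarith [sq_nonneg ((p:ℤ) - q + 1)]
    · zify
      nlinarith [sq_nonneg ((p:ℤ) - q - 1)]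

lemma sq_balance_lt {p q : ℕ} (h : p + 2 ≤ q ∨ q + 2 ≤ p) :
    ((p + q + 1) / 2)^2 + ((p + q) / 2)^2 < p^2 + q^2 := by
  obtain ⟨a, b, ha, hb⟩ : ∃ a b, a = (p + q + 1)/2 ∧ b = (p + q)/2 := ⟨_, _, rfl, rfl⟩
  rw [← ha, ← hb]
  have h1 : (a = b ∧ a + b = p + q) ∨ (a = b + 1 ∧ a + b = p + q) := by omega
  have h6 : (p:ℤ) - q ≤ -2 ∨ 2 ≤ (p:ℤ) - q := by omega
  rcases h1 with ⟨h2, h3⟩ | ⟨h2, h3⟩ <;> rcases h6 with h6 | h6 <;>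
    · zify
      nlinarith []

/-- spreading apart (with equal sum) increases the sum of squares. -/
lemma sq_spread {a b c d : ℕ} (hsum : a + b = c + d) (hac : c < a) (had : d < a) :
    c^2 + d^2 < a^2 + b^2 := by
  zify
  have hb : (b:ℤ) = c + d - a := by omega
  nlinarith [mul_pos (show (0:ℤ) < (a:ℤ) - c by omega) (show (0:ℤ) < (a:ℤ) - d by omega)]

section Sorting

variable {A : Set (Fin n →₀ ℕ)}
  (hsort : ∀ a ∈ A, ∀ b ∈ A, (sortPair a b).1 ∈ A ∧ (sortPair a b).2 ∈ A)

include hsort in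
lemma sort_step {S : Multiset (Fin n →₀ ℕ)} (hS : ∀ u ∈ S, u ∈ A) (hns : ¬ SortedTup S) :
    ∃ S', (∀ u ∈ S', u ∈ A) ∧ Multiset.card S' = Multiset.card S ∧ S'.sum = S.sum ∧
      meas S' < meas S := by
  unfold SortedTup at hns
  push_neg at hns
  obtain ⟨u, v, rest, hSe, hur⟩ := hns
  set u' := part 2 0 (u + v) with hu'
  set v' := part 2 1 (u + v) with hv'
  have huv2 : u' + v' = u + v := by
    have := parts_sum (show 0 < 2 by omega) (u + v)
    rw [Finset.sum_range_succ, Finset.sum_range_succ, Finset.sum_range_zero] at this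
    simpa using this
  have huA : u ∈ A := hS u (by rw [hSe]; exact Multiset.mem_cons_self _ _)
  have hvA : v ∈ A := hS v (by rw [hSe]; exact Multiset.mem_cons_of_mem (Multiset.mem_cons_self _ _))
  have hu'A : u' ∈ A := by
    have := (hsort u huA v hvA).1
    rwa [sortPair_eq] at this
  have hv'A : v' ∈ A := by
    have := (hsort u huA v hvA).2
    rwa [sortPair_eq] at this
  refine ⟨u' ::ₘ v' ::ₘ rest, ?_, ?_, ?_, ?_⟩
  · intro x hx
    rcases Multiset.mem_cons.mp hx with rfl | hx
    · exact hu'A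
    rcases Multiset.mem_cons.mp hx with rfl | hx
    · exact hv'A
    · exact hS x (by rw [hSe]; exact Multiset.mem_cons_of_mem (Multiset.mem_cons_of_mem hx))
  · rw [hSe]; simp
  · rw [hSe]
    simp only [Multiset.sum_cons, ← add_assoc, huv2]
  -- the measure decreases
  have hpfu' : ∀ k, pf u' k = (pf u k + pf v k + 1) / 2 := fun k => pf_part2_fst u v k
  have hpfv' : ∀ k, pf v' k = (pf u k + pf v k) / 2 := fun k => pf_part2_snd u v k
  have hcard : Multiset.card (u' ::ₘ v' ::ₘ rest) = Multiset.card S := by rw [hSe]; simp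
  have hsum : (u' ::ₘ v' ::ₘ rest).sum = S.sum := by
    rw [hSe]; simp only [Multiset.sum_cons, ← add_assoc, huv2]
  have hB : BND (u' ::ₘ v' ::ₘ rest) = BND S := by rw [BND, BND, hcard, hsum]
  have hPhiS : Phi S = w1 u + w1 v + Phi rest := by
    rw [hSe, Phi, Multiset.map_cons, Multiset.map_cons, Multiset.sum_cons, Multiset.sum_cons]
    rw [← add_assoc]; rfl
  have hPhiS' : Phi (u' ::ₘ v' ::ₘ rest) = w1 u' + w1 v' + Phi rest := by
    rw [Phi, Multiset.map_cons, Multiset.map_cons, Multiset.sum_cons, Multiset.sum_cons]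
    rw [← add_assoc]; rfl
  have hPhi2S : Phi2 S = (psi u)^2 + (psi v)^2 + Phi2 rest := by
    rw [hSe, Phi2, Multiset.map_cons, Multiset.map_cons, Multiset.sum_cons, Multiset.sum_cons]
    rw [← add_assoc]; rfl
  have hPhi2S' : Phi2 (u' ::ₘ v' ::ₘ rest) = (psi u')^2 + (psi v')^2 + Phi2 rest := by
    rw [Phi2, Multiset.map_cons, Multiset.map_cons, Multiset.sum_cons, Multiset.sum_cons]
    rw [← add_assoc]; rfl
  have hQ'B : Phi2 (u' ::ₘ v' ::ₘ rest) ≤ BND S := hB ▸ Phi2_le_BND _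
  have hQB : Phi2 S ≤ BND S := Phi2_le_BND S
  rw [meas, meas, hB]
  by_cases hbig : ∃ k ∈ Finset.range (n+1), pf u k + 2 ≤ pf v k ∨ pf v k + 2 ≤ pf u k
  · -- a genuine sorting step: `Phi` strictly decreases
    obtain ⟨k0, hk0r, hk0⟩ := hbig
    have hw : w1 u' + w1 v' < w1 u + w1 v := by
      have h1 : ∀ k ∈ Finset.range (n+1),
          (pf u' k)^2 + (pf v' k)^2 ≤ (pf u k)^2 + (pf v k)^2 := by
        intro k _
        rw [hpfu', hpfv']
        exact sq_balance _ _
      have h2 : (pf u' k0)^2 + (pf v' k0)^2 < (pf u k0)^2 + (pf v k0)^2 := by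
        rw [hpfu', hpfv']
        exact sq_balance_lt (by omega)
      have := Finset.sum_lt_sum h1 ⟨k0, hk0r, h2⟩
      calc w1 u' + w1 v' = ∑ k ∈ Finset.range (n+1), ((pf u' k)^2 + (pf v' k)^2) := by
            rw [w1, w1, Finset.sum_add_distrib]
        _ < ∑ k ∈ Finset.range (n+1), ((pf u k)^2 + (pf v k)^2) := this
        _ = w1 u + w1 v := by rw [w1, w1, Finset.sum_add_distrib]
    have hP : Phi (u' ::ₘ v' ::ₘ rest) + 1 ≤ Phi S := by rw [hPhiS, hPhiS']; omega
    have hmul : (BND S + 1) * (Phi (u' ::ₘ v' ::ₘ rest) + 1) ≤ (BND S + 1) * Phi S :=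
      Nat.mul_le_mul_left _ hP
    have hmul2 : (BND S + 1) * (Phi (u' ::ₘ v' ::ₘ rest) + 1)
        = (BND S + 1) * Phi (u' ::ₘ v' ::ₘ rest) + (BND S + 1) := by ring
    omega
  · -- a tie-breaking step: `Phi` stays, `Phi2` strictly increases
    push_neg at hbig
    have hsmall : ∀ k, pf u k ≤ pf v k + 1 ∧ pf v k ≤ pf u k + 1 := by
      apply pf_forall_of_range (R := fun a b => a ≤ b + 1 ∧ b ≤ a + 1)
      intro k hk
      have := hbig k hk
      omega
    have hm1 : ∃ k1 ∈ Finset.range (n+1), pf v k1 < pf u k1 := by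
      by_contra hc
      push_neg at hc
      apply hur
      right
      have hdom : ∀ k, pf u k ≤ pf v k ∧ pf v k ≤ pf u k + 1 := by
        apply pf_forall_of_range (R := fun a b => a ≤ b ∧ b ≤ a + 1)
        intro k hk
        exact ⟨hc k hk, (hsmall k).2⟩
      have := rel_of_dom (u := v) (v := u) (fun k => ⟨(hdom k).1, (hdom k).2⟩)
      rw [← this, sortPair_eq, sortPair_eq, add_comm v u]
    have hm2 : ∃ k2 ∈ Finset.range (n+1), pf u k2 < pf v k2 := by
      by_contra hc
      push_neg at hc
      apply hur
      left
      apply rel_of_dom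
      apply pf_forall_of_range (R := fun a b => b ≤ a ∧ a ≤ b + 1)
      intro k hk
      exact ⟨hc k hk, (hsmall k).1⟩
    obtain ⟨k1, hk1r, hk1⟩ := hm1
    obtain ⟨k2, hk2r, hk2⟩ := hm2
    have hw : w1 u' + w1 v' = w1 u + w1 v := by
      have h1 : ∀ k ∈ Finset.range (n+1),
          (pf u' k)^2 + (pf v' k)^2 = (pf u k)^2 + (pf v k)^2 := by
        intro k _
        rw [hpfu', hpfv']
        have hs := hsmall k
        have : ((pf u k + pf v k + 1)/2 = pf u k ∧ (pf u k + pf v k)/2 = pf v k) ∨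
            ((pf u k + pf v k + 1)/2 = pf v k ∧ (pf u k + pf v k)/2 = pf u k) := by omega
        rcases this with ⟨e1, e2⟩ | ⟨e1, e2⟩ <;> rw [e1, e2]
        omega
      calc w1 u' + w1 v' = ∑ k ∈ Finset.range (n+1), ((pf u' k)^2 + (pf v' k)^2) := by
            rw [w1, w1, Finset.sum_add_distrib]
        _ = ∑ k ∈ Finset.range (n+1), ((pf u k)^2 + (pf v k)^2) := Finset.sum_congr rfl h1
        _ = w1 u + w1 v := by rw [w1, w1, Finset.sum_add_distrib]
    have hpsisum : psi u' + psi v' = psi u + psi v := by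
      calc psi u' + psi v' = ∑ k ∈ Finset.range (n+1), (pf u' k + pf v' k) := by
            rw [psi, psi, Finset.sum_add_distrib]
        _ = ∑ k ∈ Finset.range (n+1), (pf u k + pf v k) := by
            apply Finset.sum_congr rfl
            intro k _
            rw [hpfu', hpfv']
            omega
        _ = psi u + psi v := by rw [psi, psi, Finset.sum_add_distrib]
    have hgtu : psi u < psi u' := by
      apply Finset.sum_lt_sum
      · intro k _
        rw [hpfu']
        have := hsmall k
        omega
      · exact ⟨k2, hk2r, by rw [hpfu']; have := hsmall k2; omega⟩
    have hgtv : psi v < psi u' := by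
      apply Finset.sum_lt_sum
      · intro k _
        rw [hpfu']
        have := hsmall k
        omega
      · exact ⟨k1, hk1r, by rw [hpfu']; have := hsmall k1; omega⟩
    have hsq : (psi u)^2 + (psi v)^2 < (psi u')^2 + (psi v')^2 :=
      sq_spread hpsisum hgtu hgtv
    have hPhiEq : Phi (u' ::ₘ v' ::ₘ rest) = Phi S := by rw [hPhiS, hPhiS', hw]
    rw [hPhiEq]
    have hQ : Phi2 S < Phi2 (u' ::ₘ v' ::ₘ rest) := by rw [hPhi2S, hPhi2S']; omega
    omega

include hsort in
theorem sort_reachable (S : Multiset (Fin n →₀ ℕ)) (hS : ∀ u ∈ S, u ∈ A) :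
    ∃ S', (∀ u ∈ S', u ∈ A) ∧ Multiset.card S' = Multiset.card S ∧ S'.sum = S.sum ∧
      SortedTup S' := by
  generalize hN : meas S = N
  induction N using Nat.strong_induction_on generalizing S with
  | _ N ih =>
    by_cases h : SortedTup S
    · exact ⟨S, hS, rfl, rfl, h⟩
    · obtain ⟨S', hS'A, hc, hs, hlt⟩ := sort_step hsort hS h
      subst hN
      obtain ⟨S'', h1, h2, h3, h4⟩ := ih (meas S') hlt S' hS'A rfl
      exact ⟨S'', h1, by omega, by rw [h3, hs], h4⟩

end Sorting

/-! ### fully sorted tuples realise the canonical parts -/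

lemma pf_multiset_sum (S : Multiset (Fin n →₀ ℕ)) (k : ℕ) :
    pf S.sum k = (S.map (fun v => pf v k)).sum := by
  induction S using Multiset.induction with
  | empty => simp [pf]
  | cons a T ih =>
    rw [Multiset.sum_cons, pf_add, Multiset.map_cons, Multiset.sum_cons, ih]

lemma exists_max_psi (S : Multiset (Fin n →₀ ℕ)) (hS : S ≠ 0) :
    ∃ u0 ∈ S, ∀ u ∈ S, psi u ≤ psi u0 := by
  induction S using Multiset.induction with
  | empty => exact absurd rfl hS
  | cons a T ih =>
    rcases eq_or_ne T 0 with rfl | hT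
    · refine ⟨a, Multiset.mem_cons_self _ _, ?_⟩
      intro u hu
      rw [Multiset.mem_cons] at hu
      rcases hu with rfl | hu
      · exact le_refl _
      · simp at hu
    · obtain ⟨u0, hu0, hmax⟩ := ih hT
      rcases le_or_gt (psi a) (psi u0) with h | h
      · refine ⟨u0, Multiset.mem_cons_of_mem hu0, ?_⟩
        intro u hu
        rcases Multiset.mem_cons.mp hu with rfl | hu
        · exact h
        · exact hmax u hu
      · refine ⟨a, Multiset.mem_cons_self _ _, ?_⟩
        intro u hu
        rcases Multiset.mem_cons.mp hu with rfl | hu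
        · exact le_refl _
        · exact (hmax u hu).trans h.le

lemma sortedTup_cons {a : Fin n →₀ ℕ} {T : Multiset (Fin n →₀ ℕ)}
    (h : SortedTup (a ::ₘ T)) : SortedTup T := by
  intro u v rest hT
  exact h u v (a ::ₘ rest) (by rw [hT]; rw [Multiset.cons_swap v a, Multiset.cons_swap u a])

lemma sortedTup_rel {a : Fin n →₀ ℕ} {T : Multiset (Fin n →₀ ℕ)}
    (h : SortedTup (a ::ₘ T)) {v : Fin n →₀ ℕ} (hv : v ∈ T) : Rel a v := by
  exact h a v (T.erase v) (by rw [Multiset.cons_erase hv])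

theorem sorted_parts_mem (S : Multiset (Fin n →₀ ℕ)) (hst : SortedTup S) :
    ∀ j < Multiset.card S, part (Multiset.card S) j S.sum ∈ S := by
  generalize hc : Multiset.card S = c
  induction c using Nat.strong_induction_on generalizing S with
  | _ c ih =>
    intro j hj
    have hS0 : S ≠ 0 := by
      intro h
      rw [h] at hc
      simp at hc
      omega
    obtain ⟨u0, hu0S, hmax⟩ := exists_max_psi S hS0
    obtain ⟨T, rfl⟩ : ∃ T, S = u0 ::ₘ T := ⟨S.erase u0, (Multiset.cons_erase hu0S).symm⟩
    have hcT : Multiset.card T = c - 1 := by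
      rw [Multiset.card_cons] at hc
      omega
    have hc1 : 1 ≤ c := by omega
    -- dominance of u0
    have hdom : ∀ v ∈ T, ∀ k, pf v k ≤ pf u0 k ∧ pf u0 k ≤ pf v k + 1 := by
      intro v hv
      have hrel := sortedTup_rel hst hv
      rcases rel_cases hrel with h' | h'
      · intro k
        have := h' k
        omega
      · -- v dominates u0, but u0 has maximal psi, so they are equal
        have hle : ∀ k, pf u0 k ≤ pf v k := fun k => by have := h' k; omega
        have hpsile : psi v ≤ psi u0 := hmax v (Multiset.mem_cons_of_mem hv)
        have hpsige : psi u0 ≤ psi v := Finset.sum_le_sum fun k _ => hle k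
        have heqr : ∀ k ∈ Finset.range (n+1), pf u0 k = pf v k := by
          by_contra hcon
          push_neg at hcon
          obtain ⟨k0, hk0r, hk0⟩ := hcon
          have : psi u0 < psi v := by
            apply Finset.sum_lt_sum
            · exact fun k _ => hle k
            · exact ⟨k0, hk0r, lt_of_le_of_ne (hle k0) hk0⟩
          omega
        have heq : ∀ k, pf u0 k = pf v k :=
          pf_forall_of_range (R := fun a b => a = b) u0 v heqr
        intro k
        rw [heq k]
        omega
    -- prefix of u0 is the ceiling
    set m := (u0 ::ₘ T).sum with hm
    have hadd : ∀ k, pf m k = pf u0 k + pf T.sum k := by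
      intro k
      rw [hm, Multiset.sum_cons, pf_add]
    have hpf0 : ∀ k, pf u0 k = (pf m k + (c - 1 - 0)) / c := by
      intro k
      set p := pf u0 k with hp
      set t := Multiset.card T with ht
      have hlow : t * (p - 1) ≤ pf T.sum k := by
        have h1 : ∀ x ∈ T.map (fun v => pf v k), p - 1 ≤ x := by
          intro x hx
          obtain ⟨v, hv, rfl⟩ := Multiset.mem_map.mp hx
          have := (hdom v hv k).2
          omega
        have h2 := Multiset.card_nsmul_le_sum h1
        rw [Multiset.card_map, smul_eq_mul] at h2
        rw [pf_multiset_sum]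
        exact h2
      have hhigh : pf T.sum k ≤ t * p := by
        have h1 : ∀ x ∈ T.map (fun v => pf v k), x ≤ p := by
          intro x hx
          obtain ⟨v, hv, rfl⟩ := Multiset.mem_map.mp hx
          have := (hdom v hv k).1
          omega
        have h2 := Multiset.sum_le_card_nsmul _ _ h1
        rw [Multiset.card_map, smul_eq_mul] at h2
        rw [pf_multiset_sum]
        exact h2
      have hlink : t * p ≤ t * (p - 1) + t := by
        have h3 : p ≤ (p - 1) + 1 := by omega
        calc t * p ≤ t * ((p - 1) + 1) := Nat.mul_le_mul_left t h3
          _ = t * (p - 1) + t := by ring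
      have hck : c = t + 1 := by omega
      have hx := hadd k
      -- establish `p = (pf m k + c - 1) / c` via division bounds
      have hpc : p * c = t * p + p := by rw [hck]; ring
      have hpc2 : (p + 1) * c = t * p + p + c := by rw [hck]; ring
      have hb1 : p * c ≤ pf m k + c - 1 := by omega
      have hb2 : pf m k + c - 1 < (p + 1) * c := by omega
      have := Nat.div_eq_of_lt_le hb1 hb2
      have hmk : pf m k + (c - 1 - 0) = pf m k + c - 1 := by omega
      rw [hmk, this]
    have hu0eq : u0 = part c 0 m := by
      apply ext_pf
      intro k
      rw [part_pf (by omega : 0 < c), hpf0 k]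
    rcases Nat.eq_zero_or_pos j with rfl | hj1
    · rw [← hu0eq]
      exact Multiset.mem_cons_self _ _
    · -- recurse on T
      have hrest : part c j m = part (c - 1) (j - 1) T.sum :=
        part_rest hj1 hj m u0 T.sum hpf0 (by rw [hm, Multiset.sum_cons])
      rw [hrest]
      have hTsorted : SortedTup T := sortedTup_cons hst
      have := ih (c - 1) (by omega) T hTsorted hcT (j - 1) (by omega)
      exact Multiset.mem_cons_of_mem this

/-! ### the key combinatorial normality lemma -/

section MainComb

variable {A : Set (Fin n →₀ ℕ)} {d : ℕ}

lemma deg_mem_closure (hdeg : ∀ a ∈ A, (∑ i, a i) = d) {m : Fin n →₀ ℕ}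
    (hm : m ∈ AddSubmonoid.closure A) : d ∣ ∑ i, m i := by
  induction hm using AddSubmonoid.closure_induction with
  | mem a ha => exact (hdeg a ha) ▸ dvd_refl d
  | zero => simp
  | add x y _ _ hx hy =>
    have : (∑ i, (x + y) i) = (∑ i, x i) + ∑ i, y i := by
      simp [Finsupp.add_apply, Finset.sum_add_distrib]
    rw [this]
    exact dvd_add hx hy

lemma multiset_deg (hdeg : ∀ a ∈ A, (∑ i, a i) = d) (S : Multiset (Fin n →₀ ℕ))
    (hS : ∀ u ∈ S, u ∈ A) : (∑ i, S.sum i) = Multiset.card S * d := by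
  induction S using Multiset.induction with
  | empty => simp
  | cons a T ih =>
    have ha : (∑ i, a i) = d := hdeg a (hS a (Multiset.mem_cons_self _ _))
    have hT := ih fun u hu => hS u (Multiset.mem_cons_of_mem hu)
    have : (∑ i, (a ::ₘ T).sum i) = (∑ i, a i) + ∑ i, T.sum i := by
      rw [Multiset.sum_cons]
      simp [Finsupp.add_apply, Finset.sum_add_distrib]
    rw [this, ha, hT, Multiset.card_cons]
    ring

/-- **Key combinatorial lemma**: sortable monoids are normal. -/
theorem mem_closure_of_smul_mem
    (hdeg : ∀ a ∈ A, (∑ i, a i) = d)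
    (hsort : ∀ a ∈ A, ∀ b ∈ A, (sortPair a b).1 ∈ A ∧ (sortPair a b).2 ∈ A)
    {v : Fin n →₀ ℕ} (hdv : d ∣ ∑ i, v i)
    {N : ℕ} (hN : 0 < N) (hNv : N • v ∈ AddSubmonoid.closure A) :
    v ∈ AddSubmonoid.closure A := by
  rcases Nat.eq_zero_or_pos d with rfl | hd
  · -- degree 0: `v = 0`
    have hv0 : (∑ i, v i) = 0 := Nat.eq_zero_of_zero_dvd hdv
    have : v = 0 := by
      ext i
      simp only [Finsupp.coe_zero, Pi.zero_apply]
      have hle : v i ≤ ∑ i', v i' := Finset.single_le_sum (fun i' _ => Nat.zero_le _)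
        (Finset.mem_univ i)
      omega
    rw [this]
    exact zero_mem _
  obtain ⟨t, ht⟩ := hdv
  obtain ⟨S, hSA, hSsum⟩ := AddSubmonoid.exists_multiset_of_mem_closure hNv
  have hcard : Multiset.card S = N * t := by
    have h1 := multiset_deg hdeg S hSA
    rw [hSsum] at h1
    have h2 : (∑ i, (N • v) i) = N * ∑ i, v i := by
      simp [Finsupp.smul_apply, Finset.mul_sum]
    rw [h2, ht] at h1
    have h3 : Multiset.card S * d = (N * t) * d := by rw [← h1]; ring
    exact Nat.eq_of_mul_eq_mul_right hd h3
  -- all the canonical parts of `N • v` lie in `A`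
  obtain ⟨S', hS'A, hc', hs', hst'⟩ := sort_reachable hsort S hSA
  have hparts : ∀ j < N * t, part (N * t) j (N • v) ∈ A := by
    intro j hj
    have := sorted_parts_mem S' hst' j (by rw [hc', hcard]; exact hj)
    rw [hc', hcard, hs', hSsum] at this
    exact hS'A _ this
  -- hence all the canonical parts of `v` lie in `A`
  have hv : v = ∑ q ∈ Finset.range t, part t q v := by
    rcases Nat.eq_zero_or_pos t with rfl | htpos
    · -- degree of v is 0, so v = 0
      have hv0 : (∑ i, v i) = 0 := by rw [ht]; ring
      have : v = 0 := by
        ext i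
        simp only [Finsupp.coe_zero, Pi.zero_apply]
        have hle : v i ≤ ∑ i', v i' := Finset.single_le_sum (fun i' _ => Nat.zero_le _)
          (Finset.mem_univ i)
        omega
      rw [this]
      simp
    · exact (parts_sum htpos v).symm
  rw [hv]
  refine AddSubmonoid.sum_mem _ fun q hq => ?_
  have hqt : q < t := Finset.mem_range.mp hq
  have hA : part t q v ∈ A := by
    rw [← part_smul hN hqt v]
    apply hparts (q * N)
    calc q * N < t * N := (Nat.mul_lt_mul_right hN).mpr hqt
      _ = N * t := Nat.mul_comm t N
  exact AddSubmonoid.subset_closure hA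

end MainComb
/-! ### monomial algebras -/

section MonomialAlgebra

variable {R₀ : Type*} [CommRing R₀] {A : Set (Fin n →₀ ℕ)}

lemma support_mem_closure {p : MvPolynomial (Fin n) R₀}
    (hp : p ∈ Algebra.adjoin R₀
      ((fun a => (MvPolynomial.monomial a (1 : R₀) : MvPolynomial (Fin n) R₀)) '' A)) :
    ∀ v ∈ p.support, v ∈ AddSubmonoid.closure A := by
  classical
  induction hp using Algebra.adjoin_induction with
  | mem x hx =>
    obtain ⟨a, ha, rfl⟩ := hx
    intro v hv
    have := MvPolynomial.support_monomial_subset hv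
    rw [Finset.mem_singleton] at this
    subst this
    exact AddSubmonoid.subset_closure ha
  | algebraMap r =>
    intro v hv
    have h0 : (algebraMap R₀ (MvPolynomial (Fin n) R₀)) r = MvPolynomial.monomial 0 r := rfl
    rw [h0] at hv
    have := MvPolynomial.support_monomial_subset hv
    rw [Finset.mem_singleton] at this
    subst this
    exact zero_mem _
  | add x y _ _ hx hy =>
    intro v hv
    rcases Finset.mem_union.mp (Finsupp.support_add hv) with h | h
    · exact hx v h
    · exact hy v h
  | mul x y _ _ hx hy =>
    intro v hv
    have := MvPolynomial.support_mul x y hv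
    rw [Finset.mem_add] at this
    obtain ⟨v1, hv1, v2, hv2, rfl⟩ := this
    exact add_mem (hx v1 hv1) (hy v2 hv2)

lemma monomial_mem_adjoin {v : Fin n →₀ ℕ} (hv : v ∈ AddSubmonoid.closure A) (c : R₀) :
    (MvPolynomial.monomial v c : MvPolynomial (Fin n) R₀) ∈ Algebra.adjoin R₀
      ((fun a => (MvPolynomial.monomial a (1 : R₀) : MvPolynomial (Fin n) R₀)) '' A) := by
  have H : ∀ v ∈ AddSubmonoid.closure A, ∀ c : R₀,
      (MvPolynomial.monomial v c : MvPolynomial (Fin n) R₀) ∈ Algebra.adjoin R₀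
        ((fun a => (MvPolynomial.monomial a (1 : R₀) : MvPolynomial (Fin n) R₀)) '' A) := by
    intro v hv
    induction hv using AddSubmonoid.closure_induction with
    | mem a ha =>
      intro c
      have : (MvPolynomial.monomial a c : MvPolynomial (Fin n) R₀)
          = MvPolynomial.C c * MvPolynomial.monomial a 1 := by
        rw [MvPolynomial.C_mul_monomial, mul_one]
      rw [this]
      exact mul_mem (Subalgebra.algebraMap_mem _ c) (Algebra.subset_adjoin ⟨a, ha, rfl⟩)
    | zero =>
      intro c
      have : (MvPolynomial.monomial (0 : Fin n →₀ ℕ) c : MvPolynomial (Fin n) R₀)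
          = MvPolynomial.C c := rfl
      rw [this]
      exact Subalgebra.algebraMap_mem _ c
    | add x y _ _ hx hy =>
      intro c
      have : (MvPolynomial.monomial (x + y) c : MvPolynomial (Fin n) R₀)
          = MvPolynomial.monomial x c * MvPolynomial.monomial y 1 := by
        rw [MvPolynomial.monomial_mul, mul_one]
      rw [this]
      exact mul_mem (hx c) (hy 1)
  exact H v hv c

end MonomialAlgebra

/-! ### transfer lemmas for integrality -/

lemma integral_push {R B C : Type*} [CommRing R] [CommRing B] [CommRing C]
    (f : R →+* B) (φ : B →+* C) {x : B} (h : f.IsIntegralElem x) :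
    (φ.comp f).IsIntegralElem (φ x) := by
  obtain ⟨p, hm, hp⟩ := h
  exact ⟨p, hm, by rw [← Polynomial.hom_eval₂, hp, map_zero]⟩

lemma integral_descend {R B C : Type*} [CommRing R] [CommRing B] [CommRing C]
    (f : R →+* B) (φ : B →+* C) (hφ : Function.Injective φ) {x : B}
    (h : (φ.comp f).IsIntegralElem (φ x)) : f.IsIntegralElem x := by
  obtain ⟨p, hm, hp⟩ := h
  refine ⟨p, hm, hφ ?_⟩
  rw [Polynomial.hom_eval₂, hp, map_zero]

lemma integral_subalgebra {R₀ B R₁ : Type*} [CommRing R₀] [CommRing B] [Algebra R₀ B]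
    [CommRing R₁] (g : R₁ →+* B) (S : Subalgebra R₀ B)
    (hg : ∀ r, g r ∈ S) {x : B} (h : g.IsIntegralElem x) : IsIntegral S x := by
  obtain ⟨p, hm, hp⟩ := h
  refine ⟨p.map (g.codRestrict S hg), hm.map _, ?_⟩
  have hcomp : (algebraMap ↥S B).comp (g.codRestrict S hg) = g := RingHom.ext fun r => rfl
  show Polynomial.eval₂ (algebraMap ↥S B) x (p.map (g.codRestrict S hg)) = 0
  rw [Polynomial.eval₂_map, hcomp, hp]

lemma mem_isIntegral {R₀ B : Type*} [CommRing R₀] [CommRing B] [Algebra R₀ B]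
    {S : Subalgebra R₀ B} {x : B} (hx : x ∈ S) : IsIntegral S x := by
  refine ⟨Polynomial.X - Polynomial.C ⟨x, hx⟩, Polynomial.monic_X_sub_C _, ?_⟩
  simp only [Polynomial.eval₂_sub, Polynomial.eval₂_X, Polynomial.eval₂_C]
  show x - (⟨x, hx⟩ : S).1 = 0
  simp

/-! ### the scalar–twist trick -/

section Twist

variable {K : Type*} [Field K] {A : Set (Fin n →₀ ℕ)}

local notation "B" => MvPolynomial (Fin n) K
local notation "B₂" => MvPolynomial (Fin n) (MvPolynomial (Fin n) K)

/-- the twisting endomorphism `x_i ↦ t_i x_i`. -/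
noncomputable def twist : B₂ →ₐ[MvPolynomial (Fin n) K] B₂ :=
  aeval fun i => C (X i) * X i

/-- the scalar `t^v`. -/
noncomputable def Wt (v : Fin n →₀ ℕ) : MvPolynomial (Fin n) K := monomial v 1

lemma Wt_eq_prod (v : Fin n →₀ ℕ) : (Wt v : B) = v.prod fun i k => X i ^ k := by
  rw [Wt, monomial_eq, map_one, one_mul]

lemma twist_monomial (v : Fin n →₀ ℕ) (c : B) :
    twist (K := K) (monomial v c) = monomial v (Wt v * c) := by
  rw [twist, aeval_monomial]
  have h1 : (v.prod fun i k => (C (X i) * X i : B₂) ^ k)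
      = (v.prod fun i k => (C (X i : B)) ^ k) * v.prod fun i k => (X i : B₂) ^ k := by
    rw [← Finsupp.prod_mul]
    apply Finsupp.prod_congr
    intro i _
    rw [mul_pow]
  have h2 : (v.prod fun i k => (C (X i : B) : B₂) ^ k) = C (Wt v) := by
    rw [Wt_eq_prod]
    rw [map_finsuppProd]
    apply Finsupp.prod_congr
    intro i _
    rw [map_pow]
  have h3 : (algebraMap B B₂) c = C c := rfl
  rw [h1, h2, h3]
  conv_rhs => rw [monomial_eq, map_mul]
  ring

lemma twist_coeff (F : B₂) (v : Fin n →₀ ℕ) :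
    coeff v (twist (K := K) F) = Wt v * coeff v F := by
  classical
  conv_lhs => rw [F.as_sum]
  rw [map_sum, coeff_sum]
  have h1 : ∀ u ∈ F.support,
      coeff v (twist (K := K) (monomial u (coeff u F)))
        = if u = v then Wt u * coeff u F else 0 := by
    intro u _
    rw [twist_monomial, coeff_monomial]
  rw [Finset.sum_congr rfl h1, Finset.sum_ite_eq' F.support v (fun u => Wt u * coeff u F)]
  by_cases hv : v ∈ F.support
  · rw [if_pos hv]
  · rw [if_neg hv, MvPolynomial.notMem_support_iff.mp hv, mul_zero]

variable (K A) in
/-- the monomial algebra over the big coefficient ring. -/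
noncomputable def R2 : Subalgebra (MvPolynomial (Fin n) K) B₂ :=
  Algebra.adjoin (MvPolynomial (Fin n) K)
    ((fun a => (monomial a (1 : MvPolynomial (Fin n) K) : B₂)) '' A)

lemma twist_adjoin {r : B₂} (hr : r ∈ R2 K A) : twist (K := K) r ∈ R2 K A := by
  induction hr using Algebra.adjoin_induction with
  | mem x hx =>
    obtain ⟨a, ha, rfl⟩ := hx
    rw [twist_monomial, mul_one]
    have : (monomial a (Wt a) : B₂) = C (Wt a) * monomial a 1 := by
      rw [C_mul_monomial, mul_one]
    rw [this]
    exact mul_mem (Subalgebra.algebraMap_mem _ _) (Algebra.subset_adjoin ⟨a, ha, rfl⟩)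
  | algebraMap r => rw [AlgHom.commutes]; exact Subalgebra.algebraMap_mem _ _
  | add x y _ _ hx hy => rw [map_add]; exact add_mem hx hy
  | mul x y _ _ hx hy => rw [map_mul]; exact mul_mem hx hy

lemma twist_integral {x : B₂} (hx : IsIntegral ↥(R2 K A) x) :
    IsIntegral ↥(R2 K A) (twist (K := K) x) := by
  obtain ⟨p, hm, hp⟩ := hx
  refine ⟨p.map (RingHom.codRestrict ((twist (K := K)).toRingHom.comp
      (algebraMap ↥(R2 K A) B₂)) (R2 K A) (fun r => twist_adjoin r.2)), hm.map _, ?_⟩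
  show Polynomial.eval₂ (algebraMap ↥(R2 K A) B₂) (twist (K := K) x) (p.map _) = 0
  rw [Polynomial.eval₂_map]
  have hcomp : (algebraMap ↥(R2 K A) B₂).comp (RingHom.codRestrict ((twist (K := K)).toRingHom.comp
      (algebraMap ↥(R2 K A) B₂)) (R2 K A) (fun r => twist_adjoin r.2))
      = (twist (K := K)).toRingHom.comp (algebraMap ↥(R2 K A) B₂) := RingHom.ext fun r => rfl
  rw [hcomp]
  have h2 := Polynomial.hom_eval₂ p (algebraMap ↥(R2 K A) B₂) (twist (K := K)).toRingHom x
  show Polynomial.eval₂ ((twist (K := K)).toRingHom.comp (algebraMap ↥(R2 K A) B₂))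
    ((twist (K := K)).toRingHom x) p = 0
  rw [← h2, hp, map_zero]

lemma twist_iter_sub (s : ℕ) (a b : B₂) :
    (twist (K := K))^[s] (a - b) = (twist (K := K))^[s] a - (twist (K := K))^[s] b := by
  induction s with
  | zero => simp
  | succ s ih =>
    rw [Function.iterate_succ_apply', Function.iterate_succ_apply',
      Function.iterate_succ_apply', ih, map_sub]

lemma twist_iter_Cmul (s : ℕ) (b : B) (f : B₂) :
    (twist (K := K))^[s] (C b * f) = C b * (twist (K := K))^[s] f := by
  induction s with
  | zero => simp
  | succ s ih =>
    rw [Function.iterate_succ_apply', Function.iterate_succ_apply', ih, map_mul]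
    congr 1
    show twist (K := K) ((algebraMap B B₂) b) = (algebraMap B B₂) b
    rw [AlgHom.commutes]

theorem extract_monomial (F : B₂) (hF : ∀ s : ℕ, IsIntegral ↥(R2 K A) ((twist (K := K))^[s] F)) :
    ∀ v ∈ F.support, ∃ c : B, c ≠ 0 ∧ IsIntegral ↥(R2 K A) (monomial v c : B₂) := by
  classical
  generalize hcard : F.support.card = N
  induction N using Nat.strong_induction_on generalizing F with
  | _ N ih =>
    intro v hv
    by_cases hsingle : F.support ⊆ {v}
    · refine ⟨coeff v F, MvPolynomial.mem_support_iff.mp hv, ?_⟩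
      have hFeq : F = monomial v (coeff v F) := by
        apply MvPolynomial.ext
        intro u
        rw [coeff_monomial]
        by_cases hu : u = v
        · subst hu; rw [if_pos rfl]
        · rw [if_neg (fun h => hu h.symm)]
          by_contra hc
          have := hsingle (MvPolynomial.mem_support_iff.mpr hc)
          rw [Finset.mem_singleton] at this
          exact hu this
      have := hF 0
      rwa [Function.iterate_zero_apply, hFeq] at this
    · obtain ⟨v0, hv0, hv0v⟩ : ∃ v0 ∈ F.support, v0 ≠ v := by
        rcases Finset.not_subset.mp hsingle with ⟨v0, h1, h2⟩
        exact ⟨v0, h1, fun h => h2 (h ▸ Finset.mem_singleton_self v)⟩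
      set F' := twist (K := K) F - C (Wt v0) * F with hF'
      have hF'mem : ∀ s : ℕ, IsIntegral ↥(R2 K A) ((twist (K := K))^[s] F') := by
        intro s
        rw [hF', twist_iter_sub, twist_iter_Cmul]
        have h1 : (twist (K := K))^[s] (twist (K := K) F) = (twist (K := K))^[s+1] F := by
          rw [Function.iterate_succ_apply]
        rw [h1]
        apply IsIntegral.sub (hF (s+1))
        apply IsIntegral.mul _ (hF s)
        apply mem_isIntegral
        show (algebraMap B B₂) (Wt v0) ∈ R2 K A
        exact Subalgebra.algebraMap_mem _ _
      have hco : ∀ u, coeff u F' = (Wt u - Wt v0) * coeff u F := by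
        intro u
        rw [hF', MvPolynomial.coeff_sub, twist_coeff, coeff_C_mul]
        ring
      have hWinj : ∀ u u' : Fin n →₀ ℕ, Wt (n := n) (K := K) u = Wt u' → u = u' := by
        intro u u' h
        by_contra hne
        have h1 : coeff u (Wt (n := n) (K := K) u) = 1 := by rw [Wt, coeff_monomial, if_pos rfl]
        have h2 : coeff u (Wt (n := n) (K := K) u') = 0 := by
          rw [Wt, coeff_monomial, if_neg (fun hh => hne hh.symm)]
        rw [h] at h1
        rw [h1] at h2
        exact one_ne_zero h2
      have hsub : F'.support ⊆ F.support.erase v0 := by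
        intro u hu
        have hcu := MvPolynomial.mem_support_iff.mp hu
        rw [hco] at hcu
        rw [Finset.mem_erase]
        constructor
        · intro h
          subst h
          rw [sub_self, zero_mul] at hcu
          exact hcu rfl
        · apply MvPolynomial.mem_support_iff.mpr
          intro h
          rw [h, mul_zero] at hcu
          exact hcu rfl
      have hvF' : v ∈ F'.support := by
        apply MvPolynomial.mem_support_iff.mpr
        rw [hco]
        apply mul_ne_zero
        · intro h
          exact hv0v (hWinj v0 v (by linear_combination -h))
        · exact MvPolynomial.mem_support_iff.mp hv
      have hlt : F'.support.card < N := by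
        rw [← hcard]
        calc F'.support.card ≤ (F.support.erase v0).card := Finset.card_le_card hsub
          _ < F.support.card := Finset.card_erase_lt_of_mem hv0
      obtain ⟨c, hc, hint⟩ := ih F'.support.card hlt F' hF'mem rfl v hvF'
      exact ⟨c, hc, hint⟩

theorem pow_smul_mem {v : Fin n →₀ ℕ} {c : B} (hc : c ≠ 0)
    (hint : IsIntegral ↥(R2 K A) (monomial v c : B₂)) :
    ∃ N, 0 < N ∧ N • v ∈ AddSubmonoid.closure A := by
  classical
  obtain ⟨p, hm, hp⟩ := hint
  set k := p.natDegree with hk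
  have hk1 : 1 ≤ k := by
    by_contra h
    have hk0 : p.natDegree = 0 := by omega
    have : p = 1 := (Polynomial.Monic.natDegree_eq_zero hm).mp hk0
    rw [this] at hp
    simp at hp
  rw [Polynomial.eval₂_eq_sum_range] at hp
  rw [← hk] at hp
  have hp2 := congrArg (coeff (k • v)) hp
  rw [coeff_sum, coeff_zero] at hp2
  have hterm : ∀ i ∈ Finset.range (k + 1),
      coeff (k • v) ((algebraMap ↥(R2 K A) B₂) (p.coeff i) * (monomial v c : B₂) ^ i)
        = coeff ((k - i) • v) ((algebraMap ↥(R2 K A) B₂) (p.coeff i)) * c ^ i := by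
    intro i hi
    have hle : (i • v : Fin n →₀ ℕ) ≤ k • v := by
      rw [Finsupp.le_def]
      intro j
      simp only [Finsupp.smul_apply, smul_eq_mul]
      exact Nat.mul_le_mul_right _ (by simpa using Nat.lt_succ_iff.mp (Finset.mem_range.mp hi))
    have hsub : (k • v - i • v : Fin n →₀ ℕ) = (k - i) • v := by
      ext j
      simp only [Finsupp.tsub_apply, Finsupp.smul_apply, smul_eq_mul]
      have : i ≤ k := by simpa using Nat.lt_succ_iff.mp (Finset.mem_range.mp hi)
      rw [Nat.sub_mul]
    rw [monomial_pow, coeff_mul_monomial', if_pos hle, hsub]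
  rw [Finset.sum_congr rfl hterm] at hp2
  rw [Finset.sum_range_succ] at hp2
  have hlast : coeff ((k - k) • v) ((algebraMap ↥(R2 K A) B₂) (p.coeff k)) * c ^ k = c ^ k := by
    have h1 : p.coeff k = 1 := hm.coeff_natDegree
    rw [h1, map_one, Nat.sub_self, zero_smul]
    have : coeff (0 : Fin n →₀ ℕ) (1 : B₂) = 1 := by simp
    rw [this, one_mul]
  rw [hlast] at hp2
  have hex : ∃ i ∈ Finset.range k,
      coeff ((k - i) • v) ((algebraMap ↥(R2 K A) B₂) (p.coeff i)) ≠ 0 := by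
    by_contra hcon
    push_neg at hcon
    have : ∑ i ∈ Finset.range k,
        coeff ((k - i) • v) ((algebraMap ↥(R2 K A) B₂) (p.coeff i)) * c ^ i = 0 := by
      apply Finset.sum_eq_zero
      intro i hi
      rw [hcon i hi, zero_mul]
    rw [this, zero_add] at hp2
    exact pow_ne_zero k hc hp2
  obtain ⟨i, hi, hne⟩ := hex
  refine ⟨k - i, by have := Finset.mem_range.mp hi; omega, ?_⟩
  have hmem : ((k - i) • v) ∈ ((algebraMap ↥(R2 K A) B₂) (p.coeff i)).support :=
    MvPolynomial.mem_support_iff.mpr hne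
  exact support_mem_closure ((p.coeff i).2) _ hmem

end Twist

/-! ### main induction -/

section Main

variable {K : Type*} [Field K] {A : Set (Fin n →₀ ℕ)} {d : ℕ}

local notation "B" => MvPolynomial (Fin n) K
local notation "B₂" => MvPolynomial (Fin n) (MvPolynomial (Fin n) K)
local notation "RK" => Algebra.adjoin K
    ((fun a => (MvPolynomial.monomial a (1 : K) : MvPolynomial (Fin n) K)) '' A)

lemma iota_adjoin {r : B} (hr : r ∈ RK) :
    MvPolynomial.map (C : K →+* B) r ∈ R2 K A := by
  induction hr using Algebra.adjoin_induction with
  | mem x hx =>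
    obtain ⟨a, ha, rfl⟩ := hx
    rw [MvPolynomial.map_monomial, map_one]
    exact Algebra.subset_adjoin ⟨a, ha, rfl⟩
  | algebraMap r =>
    show MvPolynomial.map (C : K →+* B) (C r) ∈ R2 K A
    rw [MvPolynomial.map_C]
    show (algebraMap B B₂) (C r) ∈ R2 K A
    exact Subalgebra.algebraMap_mem _ _
  | add x y _ _ hx hy => rw [map_add]; exact add_mem hx hy
  | mul x y _ _ hx hy => rw [map_mul]; exact mul_mem hx hy

lemma iota_integral {f : B} (hf : IsIntegral ↥RK f) :
    IsIntegral ↥(R2 K A) (MvPolynomial.map (C : K →+* B) f) := by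
  obtain ⟨p, hm, hp⟩ := hf
  refine ⟨p.map (RingHom.codRestrict ((MvPolynomial.map (C : K →+* B)).comp
      (algebraMap ↥RK B)) (R2 K A) (fun r => iota_adjoin r.2)), hm.map _, ?_⟩
  show Polynomial.eval₂ (algebraMap ↥(R2 K A) B₂) _ (p.map _) = 0
  rw [Polynomial.eval₂_map]
  have hcomp : (algebraMap ↥(R2 K A) B₂).comp (RingHom.codRestrict
      ((MvPolynomial.map (C : K →+* B)).comp (algebraMap ↥RK B)) (R2 K A)
      (fun r => iota_adjoin r.2))
      = (MvPolynomial.map (C : K →+* B)).comp (algebraMap ↥RK B) := RingHom.ext fun r => rfl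
  rw [hcomp]
  have h2 := Polynomial.hom_eval₂ p (algebraMap ↥RK B) (MvPolynomial.map (C : K →+* B)) f
  show Polynomial.eval₂ ((MvPolynomial.map (C : K →+* B)).comp (algebraMap ↥RK B))
    (MvPolynomial.map (C : K →+* B) f) p = 0
  rw [← h2, hp, map_zero]

theorem mem_adjoin_main (hdeg : ∀ a ∈ A, (∑ i, a i) = d)
    (hsort : ∀ a ∈ A, ∀ b ∈ A, (sortPair a b).1 ∈ A ∧ (sortPair a b).2 ∈ A)
    (f : B) (hint : IsIntegral ↥RK f)
    (hfrac : ∃ q p : B, q ∈ RK ∧ p ∈ RK ∧ q ≠ 0 ∧ q * f = p) :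
    f ∈ RK := by
  classical
  generalize hcard : f.support.card = N
  induction N using Nat.strong_induction_on generalizing f with
  | _ N ih =>
    rcases eq_or_ne f 0 with rfl | hf0
    · exact zero_mem _
    obtain ⟨q, p, hqR, hpR, hq0, hqf⟩ := hfrac
    have hp0 : p ≠ 0 := by rw [← hqf]; exact mul_ne_zero hq0 hf0
    obtain ⟨vf, hvf, hdf⟩ := AddMonoidAlgebra.exists_supDegree_mem_support
      (toLex : (Fin n →₀ ℕ) → Lex (Fin n →₀ ℕ)) hf0
    obtain ⟨vq, hvq, hdq⟩ := AddMonoidAlgebra.exists_supDegree_mem_support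
      (toLex : (Fin n →₀ ℕ) → Lex (Fin n →₀ ℕ)) hq0
    obtain ⟨vp, hvp, hdp⟩ := AddMonoidAlgebra.exists_supDegree_mem_support
      (toLex : (Fin n →₀ ℕ) → Lex (Fin n →₀ ℕ)) hp0
    have hmul : AddMonoidAlgebra.supDegree (toLex : (Fin n →₀ ℕ) → Lex (Fin n →₀ ℕ)) (q * f)
        = AddMonoidAlgebra.supDegree toLex q + AddMonoidAlgebra.supDegree toLex f := by
      apply AddMonoidAlgebra.supDegree_mul toLex.injective (fun a b => rfl) _ hq0 hf0
      apply mul_ne_zero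
      · exact fun h => hq0 ((AddMonoidAlgebra.leadingCoeff_eq_zero toLex.injective).mp h)
      · exact fun h => hf0 ((AddMonoidAlgebra.leadingCoeff_eq_zero toLex.injective).mp h)
    have hsumv : vq + vf = vp := by
      apply toLex.injective
      have : toLex (vq + vf) = toLex vq + toLex vf := rfl
      rw [this, ← hdq, ← hdf, ← hmul, hqf, hdp]
    -- closure facts
    have hvqM : vq ∈ AddSubmonoid.closure A := support_mem_closure hqR vq hvq
    have hvpM : vp ∈ AddSubmonoid.closure A := support_mem_closure hpR vp hvp
    have hdvd : d ∣ ∑ i, vf i := by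
      obtain ⟨dq, hdq'⟩ := deg_mem_closure hdeg hvqM
      obtain ⟨dp, hdp'⟩ := deg_mem_closure hdeg hvpM
      have hadd : (∑ i, vq i) + (∑ i, vf i) = ∑ i, vp i := by
        rw [← hsumv]
        simp [Finsupp.add_apply, Finset.sum_add_distrib]
      rcases Nat.eq_zero_or_pos d with rfl | hd
      · refine ⟨0, ?_⟩
        omega
      · have hqp : dq ≤ dp := by
          by_contra hcon
          push_neg at hcon
          have : d * dp < d * dq := by
            exact (Nat.mul_lt_mul_left hd).mpr hcon
          omega
        refine ⟨dp - dq, ?_⟩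
        have : d * (dp - dq) + d * dq = d * dp := by
          rw [← Nat.mul_add]
          congr 1
          omega
        omega
    -- the power condition
    have hiotaT : ∀ s : ℕ, IsIntegral ↥(R2 K A)
        ((twist (K := K))^[s] (MvPolynomial.map (C : K →+* B) f)) := by
      intro s
      induction s with
      | zero => simpa using iota_integral hint
      | succ s ihs =>
        rw [Function.iterate_succ_apply']
        exact twist_integral ihs
    have hvsupp : vf ∈ (MvPolynomial.map (C : K →+* B) f).support := by
      rw [MvPolynomial.support_map_of_injective _ (MvPolynomial.C_injective _ _)]
      exact hvf
    obtain ⟨c, hc0, hcint⟩ := extract_monomial _ hiotaT vf hvsupp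
    obtain ⟨Npow, hNpow, hNv⟩ := pow_smul_mem hc0 hcint
    have hvfM : vf ∈ AddSubmonoid.closure A :=
      mem_closure_of_smul_mem hdeg hsort hdvd hNpow hNv
    -- subtract the leading monomial and recurse
    set f₁ := f - monomial vf (coeff vf f) with hf₁
    have hmono_mem : (monomial vf (coeff vf f) : B) ∈ RK := monomial_mem_adjoin hvfM _
    have hsupp₁ : f₁.support = f.support.erase vf := by
      ext u
      rw [Finset.mem_erase, MvPolynomial.mem_support_iff, MvPolynomial.mem_support_iff]
      rw [hf₁, MvPolynomial.coeff_sub, coeff_monomial]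
      by_cases hu : u = vf
      · subst hu
        rw [if_pos rfl]
        simp
      · rw [if_neg (fun h => hu h.symm)]
        simp only [sub_zero]
        tauto
    have hcard₁ : f₁.support.card < N := by
      rw [← hcard, hsupp₁]
      exact Finset.card_erase_lt_of_mem hvf
    have hint₁ : IsIntegral ↥RK f₁ := by
      rw [hf₁]
      exact IsIntegral.sub hint (mem_isIntegral hmono_mem)
    have hfrac₁ : ∃ q' p' : B, q' ∈ RK ∧ p' ∈ RK ∧ q' ≠ 0 ∧ q' * f₁ = p' := by
      refine ⟨q, p - q * monomial vf (coeff vf f), hqR,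
        sub_mem hpR (mul_mem hqR hmono_mem), hq0, ?_⟩
      rw [hf₁, mul_sub, hqf]
    have hf₁R : f₁ ∈ RK := ih f₁.support.card hcard₁ f₁ hint₁ hfrac₁ rfl
    have : f = f₁ + monomial vf (coeff vf f) := by rw [hf₁]; ring
    rw [this]
    exact add_mem hf₁R hmono_mem

end Main

end Stmt1

open scoped nonZeroDivisors
open Stmt1

/-- If `A` is a sortable set of monomials of degree `d` in
`S = K[x_1,…,x_n]`, then the `K`-subalgebra `K[A]` of `S` generated by `A` is an
integrally closed (normal) integral domain. -/
theorem stmt1 {K : Type*} [Field K] {n d : ℕ} (A : Set (Fin n →₀ ℕ))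
    (hdeg : ∀ a ∈ A, (∑ i, a i) = d)
    (hsort : ∀ a ∈ A, ∀ b ∈ A, (sortPair a b).1 ∈ A ∧ (sortPair a b).2 ∈ A) :
    IsDomain ↥(Algebra.adjoin K
        ((fun a => (MvPolynomial.monomial a (1 : K) : MvPolynomial (Fin n) K)) '' A)) ∧
    IsIntegrallyClosed ↥(Algebra.adjoin K
        ((fun a => (MvPolynomial.monomial a (1 : K) : MvPolynomial (Fin n) K)) '' A)) := by
  classical
  set R := Algebra.adjoin K
      ((fun a => (MvPolynomial.monomial a (1 : K) : MvPolynomial (Fin n) K)) '' A) with hRdef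
  refine ⟨inferInstance, ?_⟩
  rw [isIntegrallyClosed_iff (FractionRing ↥R)]
  intro x hx
  set B := MvPolynomial (Fin n) K with hBdef
  set FF := FractionRing B with hFFdef
  set g : ↥R →+* FF := (algebraMap B FF).comp (algebraMap ↥R B) with hgdef
  have hg : ∀ y : (↥R)⁰, IsUnit (g y) := by
    intro y
    have hy0 : (y : ↥R) ≠ 0 := nonZeroDivisors.coe_ne_zero y
    have hyB : (algebraMap ↥R B) (y : ↥R) ≠ 0 := by
      intro h
      apply hy0
      apply Subtype.ext
      exact h
    have : g (y : ↥R) ≠ 0 := by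
      rw [hgdef]
      simp only [RingHom.comp_apply]
      intro h
      exact hyB (IsFractionRing.injective B FF (by rw [h, map_zero]))
    exact isUnit_iff_ne_zero.mpr this
  set Θ : FractionRing ↥R →+* FF := IsLocalization.lift (M := (↥R)⁰) hg with hΘdef
  have hcomp : Θ.comp (algebraMap ↥R (FractionRing ↥R)) = g := IsLocalization.lift_comp hg
  -- push integrality into FF
  have hΘint : g.IsIntegralElem (Θ x) := by
    rw [← hcomp]
    exact integral_push (algebraMap ↥R (FractionRing ↥R)) Θ hx
  -- Θ x is integral over B
  have hBint : IsIntegral B (Θ x) := by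
    obtain ⟨p, hm, hp⟩ := hΘint
    refine ⟨p.map (algebraMap ↥R B), hm.map _, ?_⟩
    show Polynomial.eval₂ (algebraMap B FF) (Θ x) (p.map (algebraMap ↥R B)) = 0
    rw [Polynomial.eval₂_map]
    exact hp
  obtain ⟨G, hG⟩ := (IsIntegrallyClosed.isIntegral_iff (R := B) (K := FF)).mp hBint
  -- fraction condition for G
  obtain ⟨⟨r, sden⟩, hmk⟩ := IsLocalization.mk'_surjective (↥R)⁰ x
  have hspec : g r = g (sden : ↥R) * Θ x :=
    (IsLocalization.lift_mk'_spec hg r (Θ x) sden).mp (by subst hmk; rfl)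
  have hfraceq : ((sden : ↥R) : B) * G = (r : B) := by
    apply IsFractionRing.injective B FF
    rw [map_mul]
    have h1 : (algebraMap B FF) (((sden : ↥R) : B)) * (algebraMap B FF) G
        = g (sden : ↥R) * Θ x := by rw [hG, hgdef]; rfl
    have h2 : (algebraMap B FF) ((r : ↥R) : B) = g r := by rw [hgdef]; rfl
    rw [h1, h2, hspec]
  have hsden0 : ((sden : ↥R) : B) ≠ 0 := by
    intro h
    have : (sden : ↥R) = 0 := Subtype.ext h
    exact nonZeroDivisors.coe_ne_zero sden this
  -- G is integral over R
  have hGint : IsIntegral ↥R G := by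
    apply integral_descend (algebraMap ↥R B) (algebraMap B FF) (IsFractionRing.injective B FF)
    show ((algebraMap B FF).comp (algebraMap ↥R B)).IsIntegralElem ((algebraMap B FF) G)
    rw [hG]
    exact hΘint
  have hGR : G ∈ R := by
    apply mem_adjoin_main hdeg hsort G hGint
    exact ⟨((sden : ↥R) : B), ((r : ↥R) : B), (sden : ↥R).2, (r : ↥R).2, hsden0, hfraceq⟩
  refine ⟨⟨G, hGR⟩, ?_⟩
  -- conclude via injectivity of Θ
  have hΘinj : Function.Injective Θ := Θ.injective
  apply hΘinj
  have h1 : Θ ((algebraMap ↥R (FractionRing ↥R)) ⟨G, hGR⟩) = g ⟨G, hGR⟩ :=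
    IsLocalization.lift_eq hg _
  rw [h1]
  have h2 : g ⟨G, hGR⟩ = (algebraMap B FF) G := rfl
  rw [h2, hG]
end

section
/- Let n ≥ 1, d ≥ 0 be integers and a = (a_1,...,a_n) an integer vector with a_1 ≥ a_2 ≥ ... ≥ a_n ≥ 0. Then the Veronese type set A = { x_1^{b_1}⋯x_n^{b_n} : b_1 + ... + b_n = d and b_i ≤ a_i for all i } is a sortable set of monomials: for all u, v ∈ A, sort(u,v) ∈ A × A. -/
open MvPolynomial

section aux

variable {n : ℕ} (c : Fin n → ℕ)

/-- Extension of `c` to `ℕ`. -/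
private def cext : ℕ → ℕ := fun k => if h : k < n then c ⟨k, h⟩ else 0

/-- Partial sums. -/
private def T : ℕ → ℕ := fun k => ∑ j ∈ Finset.range k, cext c j

private lemma T_mono : Monotone (T c) := by
  intro x y hxy
  exact Finset.sum_le_sum_of_subset (Finset.range_subset_range.mpr hxy)

private lemma filter_lt_eq (i : Fin n) :
    ∑ j ∈ Finset.univ.filter (fun j => j < i), c j = T c i.val := by
  rw [T]
  refine Finset.sum_bij' (fun (j : Fin n) _ => j.val)
    (fun k hk => (⟨k, lt_trans (Finset.mem_range.mp hk) i.isLt⟩ : Fin n)) ?_ ?_ ?_ ?_ ?_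
  · intro j hj; simp only [Finset.mem_filter, Finset.mem_univ, true_and] at hj
    exact Finset.mem_range.mpr hj
  · intro k hk; simp only [Finset.mem_filter, Finset.mem_univ, true_and]
    exact Finset.mem_range.mp hk
  · intro j hj; rfl
  · intro k hk; rfl
  · intro j hj; simp [cext, j.isLt]

private lemma filter_le_eq (i : Fin n) :
    ∑ j ∈ Finset.univ.filter (fun j => j ≤ i), c j = T c (i.val + 1) := by
  rw [T]
  refine Finset.sum_bij' (fun (j : Fin n) _ => j.val)
    (fun k hk => (⟨k, lt_of_lt_of_le (Finset.mem_range.mp hk) i.isLt⟩ : Fin n)) ?_ ?_ ?_ ?_ ?_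
  · intro j hj; simp only [Finset.mem_filter, Finset.mem_univ, true_and] at hj
    exact Finset.mem_range.mpr (Nat.lt_succ_of_le hj)
  · intro k hk; simp only [Finset.mem_filter, Finset.mem_univ, true_and]
    exact Fin.mk_le_mk.mpr (Nat.lt_succ_iff.mp (Finset.mem_range.mp hk))
  · intro j hj; rfl
  · intro k hk; rfl
  · intro j hj; simp [cext, j.isLt]

private lemma T_top : T c n = ∑ i, c i := by
  rw [T, ← Fin.sum_univ_eq_sum_range (cext c) n]
  exact Finset.sum_congr rfl fun i _ => by simp [cext, i.isLt]

end aux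


/-- For `n ≥ 1`, `d ≥ 0` and an integer vector `a` with
`a_1 ≥ a_2 ≥ … ≥ a_n ≥ 0`, the Veronese type set
`A = { x^b : Σ b_i = d, b_i ≤ a_i for all i }` is sortable: for all `u, v ∈ A`,
`sort(u, v) ∈ A × A`. -/
theorem stmt5 {n d : ℕ} (hn : 1 ≤ n) (a : Fin n → ℕ)
    (ha : ∀ i j : Fin n, i ≤ j → a j ≤ a i) :
    ∀ u ∈ {b : Fin n →₀ ℕ | (∑ i, b i) = d ∧ ∀ i, b i ≤ a i},
    ∀ v ∈ {b : Fin n →₀ ℕ | (∑ i, b i) = d ∧ ∀ i, b i ≤ a i},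
      (sortPair u v).1 ∈ {b : Fin n →₀ ℕ | (∑ i, b i) = d ∧ ∀ i, b i ≤ a i} ∧
      (sortPair u v).2 ∈ {b : Fin n →₀ ℕ | (∑ i, b i) = d ∧ ∀ i, b i ≤ a i} := by
  intro u hu v hv
  obtain ⟨hud, hua⟩ := hu
  obtain ⟨hvd, hva⟩ := hv
  set c : Fin n → ℕ := fun i => u i + v i with hc
  have hT : T c n = 2 * d := by
    rw [T_top]; simp only [hc]; rw [Finset.sum_add_distrib, hud, hvd]; ring
  -- rewrite sortPair values
  have h1 : ∀ i, (sortPair u v).1 i =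
      ((T c (i.val + 1)) + 1) / 2 - ((T c i.val) + 1) / 2 := by
    intro i
    simp only [sortPair, Finsupp.coe_equivFunOnFinite_symm]
    rw [filter_le_eq, filter_lt_eq]
  have h2 : ∀ i, (sortPair u v).2 i =
      (T c (i.val + 1)) / 2 - (T c i.val) / 2 := by
    intro i
    simp only [sortPair, Finsupp.coe_equivFunOnFinite_symm]
    rw [filter_le_eq, filter_lt_eq]
  have hstep : ∀ i : Fin n, T c (i.val + 1) = T c i.val + c i := by
    intro i
    rw [T, T, Finset.sum_range_succ]
    congr 1
    simp [cext, i.isLt]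
  have hmono1 : Monotone (fun k => (T c k + 1) / 2) := fun x y h =>
    Nat.div_le_div_right (by have := T_mono c h; omega)
  have hmono2 : Monotone (fun k => T c k / 2) := fun x y h =>
    Nat.div_le_div_right (T_mono c h)
  constructor
  · constructor
    · have : ∑ i : Fin n, (sortPair u v).1 i
          = ∑ i : Fin n, (fun k => ((T c (k + 1)) + 1) / 2 - ((T c k) + 1) / 2) (i : ℕ) := by
        exact Finset.sum_congr rfl fun i _ => h1 i
      rw [this, Fin.sum_univ_eq_sum_range
        (fun k => ((T c (k + 1)) + 1) / 2 - ((T c k) + 1) / 2)]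
      rw [Finset.sum_range_tsub hmono1 n]
      have h0 : T c 0 = 0 := by simp [T]
      rw [hT, h0]
      omega
    · intro i
      rw [h1 i, hstep i]
      have : c i ≤ 2 * a i := by simp only [hc]; have := hua i; have := hva i; omega
      omega
  · constructor
    · have : ∑ i : Fin n, (sortPair u v).2 i
          = ∑ i : Fin n, (fun k => ((T c (k + 1))) / 2 - ((T c k)) / 2) (i : ℕ) := by
        exact Finset.sum_congr rfl fun i _ => h2 i
      rw [this, Fin.sum_univ_eq_sum_range
        (fun k => ((T c (k + 1))) / 2 - ((T c k)) / 2)]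
      rw [Finset.sum_range_tsub hmono2 n]
      have h0 : T c 0 = 0 := by simp [T]
      rw [hT, h0]
      omega
    · intro i
      rw [h2 i, hstep i]
      have : c i ≤ 2 * a i := by simp only [hc]; have := hua i; have := hva i; omega
      omega
end
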